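/- Let J(t,x,y) := (4πt)^{−1/2}[exp(−(x−y)²/(4t)) − exp(−(x+y)²/(4t))]. Then there exists a constant C > 0 such that for every t > 0 and x ∈ (0,1], ∫₀¹ |(y/x)·∂J/∂y(t,x,y)| dy ≤ C/√t (with the value at x = 0 defined as y·∂²J/(∂x∂y)(t,0,y), and the bound holding uniformly in x ∈ [0,1]). -/

import Mathlib

noncomputable def dJdy (t x y : ℝ) : ℝ :=
  (Real.sqrt (4 * Real.pi * t))⁻¹ * (1 / (2 * t)) *
    ((x - y) * Real.exp (-(x - y) ^ 2 / (4 * t)) +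
      (x + y) * Real.exp (-(x + y) ^ 2 / (4 * t)))

/-- `(y/x)·∂J/∂y(t,x,y)` for `x ≠ 0`, and `y·∂²J/(∂x∂y)(t,0,y)` at `x = 0`. -/
noncomputable def Ktilde (t x y : ℝ) : ℝ :=
  if x = 0 then
    y * ((Real.sqrt (4 * Real.pi * t))⁻¹ * (1 / t) *
      Real.exp (-y ^ 2 / (4 * t)) * (1 - y ^ 2 / (2 * t)))
  else (y / x) * dJdy t x y

lemma key_exp {u : ℝ} (hu : 0 ≤ u) : |1 - 2*u| * Real.exp (-u) ≤ 3 * Real.exp (-(u/2)) := by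
  have h1 : (1 + u/4) ≤ Real.exp (u/4) := by
    have := Real.add_one_le_exp (u/4); linarith
  have h2 : (1 + u/4)^2 ≤ Real.exp (u/2) := by
    have : Real.exp (u/2) = Real.exp (u/4) * Real.exp (u/4) := by
      rw [← Real.exp_add]; ring_nf
    rw [this, sq]
    exact mul_le_mul h1 h1 (by linarith) (le_trans (by linarith) h1)
  have h3 : |1 - 2*u| ≤ 3 * Real.exp (u/2) := by
    rw [abs_le]
    constructor <;> nlinarith [h2, sq_nonneg u, sq_nonneg (u-4)]
  calc |1 - 2*u| * Real.exp (-u) ≤ 3 * Real.exp (u/2) * Real.exp (-u) :=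
        mul_le_mul_of_nonneg_right h3 (Real.exp_pos _).le
    _ = 3 * Real.exp (-(u/2)) := by rw [mul_assoc, ← Real.exp_add]; ring_nf

lemma hasDerivAt_g (t : ℝ) (ht : 0 < t) (s : ℝ) :
    HasDerivAt (fun s => s * Real.exp (-s^2/(4*t)))
      (Real.exp (-s^2/(4*t)) * (1 - s^2/(2*t))) s := by
  have h : HasDerivAt (fun s : ℝ => -s^2/(4*t)) (-(2*s)/(4*t)) s := by
    have := ((hasDerivAt_pow 2 s).neg.div_const (4*t))
    simpa using this
  have h2 := (hasDerivAt_id s).mul h.exp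
  refine h2.congr_deriv ?_
  simp only [id]
  field_simp
  ring

lemma gauss_int (c A a b : ℝ) (hc : 0 < c) :
    ∫ y in a..b, (A+y) * Real.exp (-(A+y)^2/c)
      = c/2 * (Real.exp (-(A+a)^2/c) - Real.exp (-(A+b)^2/c)) := by
  have hd : ∀ y ∈ Set.uIcc a b, HasDerivAt (fun y => -(c/2) * Real.exp (-(A+y)^2/c))
      ((A+y) * Real.exp (-(A+y)^2/c)) y := by
    intro y _
    have h0 : HasDerivAt (fun y : ℝ => A + y) 1 y := (hasDerivAt_id y).const_add A
    have h : HasDerivAt (fun y : ℝ => -(A+y)^2/c) (-(2*(A+y))/c) y := by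
      have := ((h0.pow 2).neg.div_const c)
      simpa using this
    have h2 := (h.exp.const_mul (-(c/2)))
    refine h2.congr_deriv ?_
    field_simp
  have hint : IntervalIntegrable (fun y => (A+y) * Real.exp (-(A+y)^2/c))
      MeasureTheory.volume a b := by
    apply Continuous.intervalIntegrable; fun_prop
  rw [intervalIntegral.integral_eq_sub_of_hasDerivAt hd hint]
  ring


lemma ptwise (t x y : ℝ) (ht : 0 < t) (hx : 0 ≤ x) (hy : 0 ≤ y) :
    |Ktilde t x y| ≤ (Real.sqrt (4*Real.pi*t))⁻¹ * (1/(2*t)) *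
      (2*(|x-y| * Real.exp (-(x-y)^2/(4*t))) + 2*((x+y) * Real.exp (-(x+y)^2/(4*t)))
        + 6*(y * Real.exp (-y^2/(32*t)))) := by
  have hπ := Real.pi_pos
  set c0 := (Real.sqrt (4*Real.pi*t))⁻¹ with hc0
  have hc0pos : 0 < c0 := by rw [hc0]; positivity
  have hA0 : 0 ≤ |x-y| * Real.exp (-(x-y)^2/(4*t)) := by positivity
  have hB0 : 0 ≤ (x+y) * Real.exp (-(x+y)^2/(4*t)) := by positivity
  have hD0 : 0 ≤ y * Real.exp (-y^2/(32*t)) := by positivity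
  have keyb : ∀ s : ℝ, |Real.exp (-s^2/(4*t)) * (1 - s^2/(2*t))| ≤ 3 * Real.exp (-s^2/(8*t)) := by
    intro s
    have hu : 0 ≤ s^2/(4*t) := by positivity
    have := key_exp hu
    have e1 : 1 - 2*(s^2/(4*t)) = 1 - s^2/(2*t) := by ring
    have e2 : -(s^2/(4*t)) = -s^2/(4*t) := by ring
    have e3 : -(s^2/(4*t)/2) = -s^2/(8*t) := by ring
    rw [e1, e2, e3] at this
    rw [abs_mul, abs_of_pos (Real.exp_pos _), mul_comm]
    exact this
  by_cases hx0 : x = 0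
  · subst hx0
    rw [Ktilde, if_pos rfl]
    have hre : (Real.sqrt (4*Real.pi*t))⁻¹ * (1/t) * Real.exp (-y^2/(4*t)) * (1 - y^2/(2*t))
        = (c0*(1/t)) * (Real.exp (-y^2/(4*t)) * (1 - y^2/(2*t))) := by rw [hc0]; ring
    rw [hre, abs_mul, abs_of_nonneg hy, abs_mul,
      abs_of_nonneg (by positivity : (0:ℝ) ≤ c0*(1/t))]
    have h2 : y * ((c0*(1/t)) * |Real.exp (-y^2/(4*t)) * (1 - y^2/(2*t))|)
        ≤ y * ((c0*(1/t)) * (3 * Real.exp (-y^2/(8*t)))) := by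
      apply mul_le_mul_of_nonneg_left _ hy
      exact mul_le_mul_of_nonneg_left (keyb y) (by positivity)
    have h3 : Real.exp (-y^2/(8*t)) ≤ Real.exp (-y^2/(32*t)) := by
      apply Real.exp_le_exp.mpr
      rw [div_le_div_iff₀ (by positivity) (by positivity)]
      nlinarith [sq_nonneg y]
    have h4 : y * ((c0*(1/t)) * (3 * Real.exp (-y^2/(8*t))))
        ≤ c0 * (1/(2*t)) * (6*(y * Real.exp (-y^2/(32*t)))) := by
      have step : y * ((c0*(1/t)) * (3 * Real.exp (-y^2/(8*t))))
          ≤ y * ((c0*(1/t)) * (3 * Real.exp (-y^2/(32*t)))) := by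
        apply mul_le_mul_of_nonneg_left _ hy
        apply mul_le_mul_of_nonneg_left _ (by positivity)
        linarith
      calc y * ((c0*(1/t)) * (3 * Real.exp (-y^2/(8*t))))
          ≤ y * ((c0*(1/t)) * (3 * Real.exp (-y^2/(32*t)))) := step
        _ = c0 * (1/(2*t)) * (6*(y * Real.exp (-y^2/(32*t)))) := by field_simp; ring
    have hfinal : c0 * (1/(2*t)) * (6*(y * Real.exp (-y^2/(32*t))))
        ≤ c0 * (1/(2*t)) *
          (2*(|(0:ℝ)-y| * Real.exp (-((0:ℝ)-y)^2/(4*t))) + 2*(((0:ℝ)+y) * Real.exp (-((0:ℝ)+y)^2/(4*t)))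
            + 6*(y * Real.exp (-y^2/(32*t)))) := by
      apply mul_le_mul_of_nonneg_left _ (by positivity)
      linarith [hA0, hB0]
    linarith
  · have hxpos : 0 < x := lt_of_le_of_ne hx (Ne.symm hx0)
    rw [Ktilde, if_neg hx0, dJdy]
    set f : ℝ := (x - y) * Real.exp (-(x - y)^2/(4*t)) + (x + y) * Real.exp (-(x + y)^2/(4*t)) with hf
    have habs : |y / x * ((Real.sqrt (4*Real.pi*t))⁻¹ * (1/(2*t)) * f)|
        = (y/x) * (c0 * (1/(2*t))) * |f| := by
      rw [abs_mul, abs_of_nonneg (by positivity : (0:ℝ) ≤ y/x), abs_mul,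
        abs_of_nonneg (by positivity : (0:ℝ) ≤ (Real.sqrt (4*Real.pi*t))⁻¹ * (1/(2*t)))]
      rw [hc0]
      ring
    rw [habs]
    rcases le_or_gt y (2*x) with hcase | hcase
    · have hfb : |f| ≤ |x-y| * Real.exp (-(x-y)^2/(4*t)) + (x+y) * Real.exp (-(x+y)^2/(4*t)) := by
        calc |f| ≤ |(x - y) * Real.exp (-(x - y)^2/(4*t))| + |(x + y) * Real.exp (-(x + y)^2/(4*t))| := abs_add_le _ _
          _ = |x-y| * Real.exp (-(x-y)^2/(4*t)) + (x+y) * Real.exp (-(x+y)^2/(4*t)) := by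
              rw [abs_mul, abs_of_pos (Real.exp_pos _), abs_mul, abs_of_pos (Real.exp_pos _),
                abs_of_nonneg (by linarith : (0:ℝ) ≤ x + y)]
      have hyx : y/x ≤ 2 := by rw [div_le_iff₀ hxpos]; linarith
      calc (y/x) * (c0 * (1/(2*t))) * |f|
          ≤ 2 * (c0 * (1/(2*t))) * (|x-y| * Real.exp (-(x-y)^2/(4*t)) + (x+y) * Real.exp (-(x+y)^2/(4*t))) := by
            apply mul_le_mul (mul_le_mul_of_nonneg_right hyx (by positivity)) hfb (abs_nonneg _)
            positivity
        _ = c0 * (1/(2*t)) * (2*(|x-y| * Real.exp (-(x-y)^2/(4*t))) + 2*((x+y) * Real.exp (-(x+y)^2/(4*t)))) := by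
            ring
        _ ≤ c0 * (1/(2*t)) *
            (2*(|x-y| * Real.exp (-(x-y)^2/(4*t))) + 2*((x+y) * Real.exp (-(x+y)^2/(4*t)))
              + 6*(y * Real.exp (-y^2/(32*t)))) := by
            apply mul_le_mul_of_nonneg_left _ (by positivity)
            linarith
    · set g : ℝ → ℝ := fun s => s * Real.exp (-s^2/(4*t)) with hg
      set g' : ℝ → ℝ := fun s => Real.exp (-s^2/(4*t)) * (1 - s^2/(2*t)) with hg'
      have hab : y - x < y + x := by linarith
      obtain ⟨ξ, hξ, hslope⟩ := exists_hasDerivAt_eq_slope g g' hab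
        (fun s _ => (hasDerivAt_g t ht s).continuousAt.continuousWithinAt)
        (fun s _ => hasDerivAt_g t ht s)
      have h2x : y + x - (y - x) = 2*x := by ring
      rw [h2x] at hslope
      have hfeq : f = g (y+x) - g (y-x) := by
        rw [hg]; simp only [hf]
        have e1 : (y+x)^2 = (x+y)^2 := by ring
        have e2 : (y-x)^2 = (x-y)^2 := by ring
        rw [e1, e2]; ring
      have hfval : f = g' ξ * (2*x) := by
        rw [hfeq, hslope]
        field_simp
      have hξlb : y/2 ≤ ξ := by
        have := hξ.1; linarith
      have hξsq : y^2/4 ≤ ξ^2 := by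
        have h0 : 0 ≤ y/2 := by linarith
        nlinarith
      have hgb : |g' ξ| ≤ 3 * Real.exp (-y^2/(32*t)) := by
        calc |g' ξ| ≤ 3 * Real.exp (-ξ^2/(8*t)) := keyb ξ
          _ ≤ 3 * Real.exp (-y^2/(32*t)) := by
              apply mul_le_mul_of_nonneg_left _ (by norm_num)
              apply Real.exp_le_exp.mpr
              rw [div_le_div_iff₀ (by positivity) (by positivity)]
              nlinarith
      have key : (y/x) * (c0 * (1/(2*t))) * |f| ≤ c0 * (1/(2*t)) * (6*(y * Real.exp (-y^2/(32*t)))) := by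
        rw [hfval, abs_mul, abs_of_nonneg (by linarith : (0:ℝ) ≤ 2*x)]
        have hre : (y/x) * (c0 * (1/(2*t))) * (|g' ξ| * (2*x))
            = (c0 * (1/(2*t))) * (2*y) * |g' ξ| := by
          field_simp
        rw [hre]
        calc (c0 * (1/(2*t))) * (2*y) * |g' ξ|
            ≤ (c0 * (1/(2*t))) * (2*y) * (3 * Real.exp (-y^2/(32*t))) := by
              apply mul_le_mul_of_nonneg_left hgb (by positivity)
          _ = c0 * (1/(2*t)) * (6*(y * Real.exp (-y^2/(32*t)))) := by ring
      calc (y/x) * (c0 * (1/(2*t))) * |f|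
          ≤ c0 * (1/(2*t)) * (6*(y * Real.exp (-y^2/(32*t)))) := key
        _ ≤ c0 * (1/(2*t)) *
            (2*(|x-y| * Real.exp (-(x-y)^2/(4*t))) + 2*((x+y) * Real.exp (-(x+y)^2/(4*t)))
              + 6*(y * Real.exp (-y^2/(32*t)))) := by
            apply mul_le_mul_of_nonneg_left _ (by positivity)
            linarith

theorem stmt12 : ∃ C > 0, ∀ t > 0, ∀ x ∈ Set.Icc (0:ℝ) 1,
    (∫ y in (0:ℝ)..1, |Ktilde t x y|) ≤ C / Real.sqrt t := by
  refine ⟨54, by norm_num, ?_⟩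
  intro t ht x hx
  obtain ⟨hx0, hx1⟩ := hx
  have hπ := Real.pi_pos
  set c0 := (Real.sqrt (4*Real.pi*t))⁻¹ with hc0
  have hc0pos : 0 < c0 := by rw [hc0]; positivity
  set A : ℝ → ℝ := fun y => |x-y| * Real.exp (-(x-y)^2/(4*t)) with hA
  set B : ℝ → ℝ := fun y => (x+y) * Real.exp (-(x+y)^2/(4*t)) with hB
  set D : ℝ → ℝ := fun y => y * Real.exp (-y^2/(32*t)) with hD
  have hAc : Continuous A := by rw [hA]; fun_prop
  have hBc : Continuous B := by rw [hB]; fun_prop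
  have hDc : Continuous D := by rw [hD]; fun_prop
  have hKcont : Continuous (fun y => Ktilde t x y) := by
    by_cases h : x = 0
    · subst h
      have he : (fun y => Ktilde t 0 y) = fun y =>
          y * ((Real.sqrt (4*Real.pi*t))⁻¹ * (1/t) * Real.exp (-y^2/(4*t)) * (1 - y^2/(2*t))) := by
        funext y; rw [Ktilde, if_pos rfl]
      rw [he]; fun_prop
    · simp only [Ktilde, if_neg h, dJdy]
      fun_prop
  have hGcont : Continuous (fun y : ℝ => c0 * (1/(2*t)) * (2*(A y) + 2*(B y) + 6*(D y))) := by
    fun_prop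
  have hmono : (∫ y in (0:ℝ)..1, |Ktilde t x y|)
      ≤ ∫ y in (0:ℝ)..1, c0 * (1/(2*t)) * (2*(A y) + 2*(B y) + 6*(D y)) := by
    apply intervalIntegral.integral_mono_on (by norm_num : (0:ℝ) ≤ 1)
      ((hKcont.abs).intervalIntegrable 0 1) (hGcont.intervalIntegrable 0 1)
    intro y hy
    exact ptwise t x y ht hx0 hy.1
  -- bound the three integrals
  have hIB : (∫ y in (0:ℝ)..1, B y) ≤ 2*t := by
    rw [hB, gauss_int (4*t) x 0 1 (by positivity)]
    have b1 : Real.exp (-(x+0)^2/(4*t)) ≤ 1 := by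
      apply Real.exp_le_one_iff.mpr
      apply div_nonpos_of_nonpos_of_nonneg
      · nlinarith [sq_nonneg (x+0)]
      · linarith
    have b2 := (Real.exp_pos (-(x+1)^2/(4*t))).le
    nlinarith
  have hID : (∫ y in (0:ℝ)..1, D y) ≤ 16*t := by
    have hg := gauss_int (32*t) 0 0 1 (by positivity)
    simp only [zero_add] at hg
    rw [hD, hg]
    have b1 : Real.exp (-(0:ℝ)^2/(32*t)) = 1 := by norm_num
    have b2 := (Real.exp_pos (-(1:ℝ)^2/(32*t))).le
    rw [b1]
    nlinarith
  have hIA : (∫ y in (0:ℝ)..1, A y) ≤ 4*t := by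
    have hi1 : IntervalIntegrable A MeasureTheory.volume 0 x := hAc.intervalIntegrable 0 x
    have hi2 : IntervalIntegrable A MeasureTheory.volume x 1 := hAc.intervalIntegrable x 1
    rw [← intervalIntegral.integral_add_adjacent_intervals hi1 hi2]
    have p1 : (∫ y in (0:ℝ)..x, A y) ≤ 2*t := by
      have e1 : (∫ y in (0:ℝ)..x, A y)
          = -∫ y in (0:ℝ)..x, ((-x)+y) * Real.exp (-((-x)+y)^2/(4*t)) := by
        rw [← intervalIntegral.integral_neg]
        apply intervalIntegral.integral_congr
        intro y hy
        rw [Set.uIcc_of_le hx0] at hy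
        simp only [hA]
        have h1 : |x - y| = x - y := abs_of_nonneg (by linarith [hy.2])
        have h2 : ((-x)+y)^2 = (x-y)^2 := by ring
        rw [h1, h2]
        ring
      rw [e1, gauss_int (4*t) (-x) 0 x (by positivity)]
      have b1 : Real.exp (-(-x+0)^2/(4*t)) ≤ 1 := by
        apply Real.exp_le_one_iff.mpr
        apply div_nonpos_of_nonpos_of_nonneg
        · nlinarith [sq_nonneg (-x+0)]
        · linarith
      have b1' := (Real.exp_pos (-(-x+0)^2/(4*t))).le
      have b2 : Real.exp (-(-x+x)^2/(4*t)) = 1 := by norm_num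
      rw [b2]
      nlinarith
    have p2 : (∫ y in x..(1:ℝ), A y) ≤ 2*t := by
      have e2 : (∫ y in x..(1:ℝ), A y)
          = ∫ y in x..(1:ℝ), ((-x)+y) * Real.exp (-((-x)+y)^2/(4*t)) := by
        apply intervalIntegral.integral_congr
        intro y hy
        rw [Set.uIcc_of_le hx1] at hy
        simp only [hA]
        have h1 : |x - y| = -(x - y) := abs_of_nonpos (by linarith [hy.1])
        have h2 : ((-x)+y)^2 = (x-y)^2 := by ring
        rw [h1, h2]
        ring
      rw [e2, gauss_int (4*t) (-x) x 1 (by positivity)]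
      have b1 : Real.exp (-(-x+x)^2/(4*t)) = 1 := by norm_num
      have b2 := (Real.exp_pos (-(-x+1)^2/(4*t))).le
      rw [b1]
      nlinarith
    linarith
  -- assemble
  have hGval : (∫ y in (0:ℝ)..1, c0 * (1/(2*t)) * (2*(A y) + 2*(B y) + 6*(D y)))
      = c0 * (1/(2*t)) * (2*(∫ y in (0:ℝ)..1, A y) + 2*(∫ y in (0:ℝ)..1, B y)
          + 6*(∫ y in (0:ℝ)..1, D y)) := by
    rw [intervalIntegral.integral_const_mul]
    congr 1
    rw [intervalIntegral.integral_add (f := fun y => 2*(A y) + 2*(B y)) (g := fun y => 6*(D y))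
          (((continuous_const.mul hAc).add (continuous_const.mul hBc)).intervalIntegrable 0 1)
          ((continuous_const.mul hDc).intervalIntegrable 0 1),
        intervalIntegral.integral_add (f := fun y => 2*(A y)) (g := fun y => 2*(B y))
          ((continuous_const.mul hAc).intervalIntegrable 0 1)
          ((continuous_const.mul hBc).intervalIntegrable 0 1),
        intervalIntegral.integral_const_mul, intervalIntegral.integral_const_mul,
        intervalIntegral.integral_const_mul]
  have hsum : c0 * (1/(2*t)) * (2*(∫ y in (0:ℝ)..1, A y) + 2*(∫ y in (0:ℝ)..1, B y)
          + 6*(∫ y in (0:ℝ)..1, D y)) ≤ c0 * (1/(2*t)) * (108*t) := by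
    apply mul_le_mul_of_nonneg_left _ (by positivity)
    linarith
  have hfin : c0 * (1/(2*t)) * (108*t) = 54 * c0 := by field_simp; ring
  have hle : 54 * c0 ≤ 54 / Real.sqrt t := by
    have hst : 0 < Real.sqrt t := Real.sqrt_pos.mpr ht
    have hmon : Real.sqrt t ≤ Real.sqrt (4*Real.pi*t) := Real.sqrt_le_sqrt (by nlinarith [Real.pi_gt_three])
    have hinv : c0 ≤ (Real.sqrt t)⁻¹ := by
      rw [hc0]
      exact inv_anti₀ hst hmon
    rw [div_eq_mul_inv]
    linarith
  calc (∫ y in (0:ℝ)..1, |Ktilde t x y|)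
      ≤ ∫ y in (0:ℝ)..1, c0 * (1/(2*t)) * (2*(A y) + 2*(B y) + 6*(D y)) := hmono
    _ = c0 * (1/(2*t)) * (2*(∫ y in (0:ℝ)..1, A y) + 2*(∫ y in (0:ℝ)..1, B y)
          + 6*(∫ y in (0:ℝ)..1, D y)) := hGval
    _ ≤ c0 * (1/(2*t)) * (108*t) := hsum
    _ = 54 * c0 := hfin
    _ ≤ 54 / Real.sqrt t := hle
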